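/- For any function f : S → ℝ and any policies π', π with π(a|s) > 0 for all s, a, the following two bounds hold: J(π') - J(π) ≥ (1/(1-γ)) (L_{π,f}(π') - 2 ε_f^{π'} D_TV(d^{π'}‖d^π)) and J(π') - J(π) ≤ (1/(1-γ)) (L_{π,f}(π') + 2 ε_f^{π'} D_TV(d^{π'}‖d^π)), where D_TV(d^{π'}‖d^π) = (1/2) ∑_s |d^{π'}(s) - d^π(s)|. When π' = π, both sides are identically zero. -/

import Mathlib

open BigOperators Finset Matrix

noncomputable section

variable {S A : Type*}

/-- Policy transition matrix (column-stochastic): entry `(s', s)` is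
`P_pol(s'|s) = ∑ a, P(s'|s,a) pol(a|s)`. -/
def Pmat [Fintype A] (P : S → A → S → ℝ) (pol : S → A → ℝ) : Matrix S S ℝ :=
  fun s' s => ∑ a, P s a s' * pol s a

/-- Discounted future state distribution `d^π = (1-γ) ∑_t γ^t P_π^t μ`. -/
def dFut [Fintype S] [DecidableEq S] [Fintype A] (γ : ℝ) (P : S → A → S → ℝ)
    (μ : S → ℝ) (pol : S → A → ℝ) : S → ℝ :=
  fun s => (1 - γ) * ∑' t : ℕ, γ ^ t * ((Pmat P pol ^ t) *ᵥ μ) s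

/-- Discounted return `J(π)` (also used as the cost return `J_C(π)` with a cost `C`
in place of the reward `R`). -/
def Jret [Fintype S] [DecidableEq S] [Fintype A] (γ : ℝ) (P : S → A → S → ℝ)
    (R : S → A → S → ℝ) (μ : S → ℝ) (pol : S → A → ℝ) : ℝ :=
  (1 / (1 - γ)) * ∑ s, dFut γ P μ pol s * (∑ a, pol s a * (∑ s', P s a s' * R s a s'))

/-- Total variational divergence between action distributions at state `s`. -/
def DTV [Fintype A] (pol' pol : S → A → ℝ) (s : S) : ℝ :=
  (1 / 2) * ∑ a, |pol' s a - pol s a|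

/-- Kullback–Leibler divergence between action distributions at state `s`. -/
def DKL [Fintype A] (pol' pol : S → A → ℝ) (s : S) : ℝ :=
  ∑ a, pol' s a * Real.log (pol' s a / pol s a)

/-- Advantage function `A^π(s,a) = Q^π(s,a) - V^π(s)` built from a value function `V`
(also used for cost advantages with a cost `C` in place of `R`). -/
def Adv [Fintype S] (γ : ℝ) (P : S → A → S → ℝ) (R : S → A → S → ℝ)
    (V : S → ℝ) (s : S) (a : A) : ℝ :=
  (∑ s', P s a s' * (R s a s' + γ * V s')) - V s

/-- `ε_f^{π'} = max_s |E_{a∼π'(·|s), s'∼P}[δ_f(s,a,s')]|` where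
`δ_f(s,a,s') = R(s,a,s') + γ f(s') - f(s)`. -/
def epsF [Fintype S] [Fintype A] (γ : ℝ) (P : S → A → S → ℝ) (R : S → A → S → ℝ)
    (f : S → ℝ) (pol' : S → A → ℝ) : ℝ :=
  ⨆ s, |∑ a, pol' s a * (∑ s', P s a s' * (R s a s' + γ * f s' - f s))|

/-- Surrogate `L_{π,f}(π') = E_{s∼d^π, a∼π, s'∼P}[(π'(a|s)/π(a|s) - 1) δ_f(s,a,s')]`. -/
def Lsurr [Fintype S] [DecidableEq S] [Fintype A] (γ : ℝ) (P : S → A → S → ℝ)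
    (R : S → A → S → ℝ) (μ : S → ℝ) (f : S → ℝ) (pol pol' : S → A → ℝ) : ℝ :=
  ∑ s, dFut γ P μ pol s * (∑ a, pol s a * (∑ s', P s a s' *
    ((pol' s a / pol s a - 1) * (R s a s' + γ * f s' - f s))))


-- auxiliary lemmas
section aux
variable [Fintype S] [DecidableEq S] [Fintype A]

lemma pow_mulVec_nonneg (M : Matrix S S ℝ) (hM : ∀ s' s, 0 ≤ M s' s)
    (v : S → ℝ) (hv : ∀ s, 0 ≤ v s) (t : ℕ) (s : S) :
    0 ≤ ((M ^ t) *ᵥ v) s := by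
  induction t generalizing s with
  | zero => simpa using hv s
  | succ n ih =>
    rw [pow_succ', ← Matrix.mulVec_mulVec]
    exact Finset.sum_nonneg fun s₂ _ => mul_nonneg (hM s s₂) (ih s₂)

lemma mulVec_sum (M : Matrix S S ℝ) (hM1 : ∀ s, ∑ s', M s' s = 1) (v : S → ℝ) :
    ∑ s, (M *ᵥ v) s = ∑ s, v s := by
  simp only [Matrix.mulVec, dotProduct]
  rw [Finset.sum_comm]
  simp [← Finset.sum_mul, hM1]

lemma pow_mulVec_sum (M : Matrix S S ℝ) (hM1 : ∀ s, ∑ s', M s' s = 1) (v : S → ℝ) (t : ℕ) :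
    ∑ s, ((M ^ t) *ᵥ v) s = ∑ s, v s := by
  induction t with
  | zero => simp
  | succ n ih =>
    rw [pow_succ', ← Matrix.mulVec_mulVec, mulVec_sum M hM1, ih]

lemma pow_mulVec_le_one (M : Matrix S S ℝ) (hM0 : ∀ s' s, 0 ≤ M s' s)
    (hM1 : ∀ s, ∑ s', M s' s = 1) (v : S → ℝ) (hv : ∀ s, 0 ≤ v s)
    (hv1 : ∑ s, v s = 1) (t : ℕ) (s : S) :
    ((M ^ t) *ᵥ v) s ≤ 1 := by
  calc ((M ^ t) *ᵥ v) s ≤ ∑ s', ((M ^ t) *ᵥ v) s' :=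
        Finset.single_le_sum (fun s' _ => pow_mulVec_nonneg M hM0 v hv t s') (Finset.mem_univ s)
    _ = 1 := by rw [pow_mulVec_sum M hM1, hv1]

lemma summable_series (γ : ℝ) (hγ0 : 0 ≤ γ) (hγ1 : γ < 1)
    (M : Matrix S S ℝ) (hM0 : ∀ s' s, 0 ≤ M s' s) (hM1 : ∀ s, ∑ s', M s' s = 1)
    (v : S → ℝ) (hv : ∀ s, 0 ≤ v s) (hv1 : ∑ s, v s = 1) (s : S) :
    Summable (fun t : ℕ => γ ^ t * ((M ^ t) *ᵥ v) s) := by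
  refine Summable.of_nonneg_of_le
    (fun t => mul_nonneg (pow_nonneg hγ0 t) (pow_mulVec_nonneg M hM0 v hv t s))
    (fun t => ?_) (summable_geometric_of_lt_one hγ0 hγ1)
  exact mul_le_of_le_one_right (pow_nonneg hγ0 t) (pow_mulVec_le_one M hM0 hM1 v hv hv1 t s)

end aux

section aux2
variable [Fintype S] [DecidableEq S] [Fintype A]
variable (γ : ℝ) (P : S → A → S → ℝ) (μ : S → ℝ) (pol : S → A → ℝ)

lemma Pmat_nonneg (hP0 : ∀ s a s', 0 ≤ P s a s') (hpol0 : ∀ s a, 0 ≤ pol s a)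
    (s' s : S) : 0 ≤ Pmat P pol s' s :=
  Finset.sum_nonneg fun a _ => mul_nonneg (hP0 s a s') (hpol0 s a)

lemma Pmat_col_sum (hP1 : ∀ s a, (∑ s', P s a s') = 1) (hpol1 : ∀ s, (∑ a, pol s a) = 1)
    (s : S) : ∑ s', Pmat P pol s' s = 1 := by
  unfold Pmat
  rw [Finset.sum_comm]
  simp [← Finset.sum_mul, hP1, hpol1]

lemma dFut_fixed (hγ0 : 0 ≤ γ) (hγ1 : γ < 1)
    (hP0 : ∀ s a s', 0 ≤ P s a s') (hP1 : ∀ s a, (∑ s', P s a s') = 1)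
    (hμ0 : ∀ s, 0 ≤ μ s) (hμ1 : (∑ s, μ s) = 1)
    (hpol0 : ∀ s a, 0 ≤ pol s a) (hpol1 : ∀ s, (∑ a, pol s a) = 1) (s : S) :
    γ * (Pmat P pol *ᵥ dFut γ P μ pol) s = dFut γ P μ pol s - (1 - γ) * μ s := by
  set M := Pmat P pol with hM
  have hM0 := Pmat_nonneg P pol hP0 hpol0
  have hM1 := Pmat_col_sum P pol hP1 hpol1
  have hsumm : ∀ s₂ : S, Summable (fun t : ℕ => γ ^ t * ((M ^ t) *ᵥ μ) s₂) :=
    fun s₂ => summable_series γ hγ0 hγ1 M hM0 hM1 μ hμ0 hμ1 s₂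
  have h1 : (M *ᵥ dFut γ P μ pol) s
      = (1 - γ) * ∑' t : ℕ, γ ^ t * ((M ^ (t + 1)) *ᵥ μ) s := by
    rw [show (M *ᵥ dFut γ P μ pol) s
        = ∑ s₂, M s s₂ * ((1 - γ) * ∑' t : ℕ, γ ^ t * ((M ^ t) *ᵥ μ) s₂) from rfl]
    have : ∀ s₂ : S, M s s₂ * ((1 - γ) * ∑' t : ℕ, γ ^ t * ((M ^ t) *ᵥ μ) s₂)
        = (1 - γ) * ∑' t : ℕ, M s s₂ * (γ ^ t * ((M ^ t) *ᵥ μ) s₂) := by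
      intro s₂
      calc M s s₂ * ((1 - γ) * ∑' t : ℕ, γ ^ t * ((M ^ t) *ᵥ μ) s₂)
          = (1 - γ) * (M s s₂ * ∑' t : ℕ, γ ^ t * ((M ^ t) *ᵥ μ) s₂) := by ring
        _ = (1 - γ) * ∑' t : ℕ, M s s₂ * (γ ^ t * ((M ^ t) *ᵥ μ) s₂) := by
            rw [tsum_mul_left]
    rw [Finset.sum_congr rfl fun s₂ _ => this s₂, ← Finset.mul_sum]
    congr 1
    rw [← Summable.tsum_finsetSum (fun s₂ _ => ((hsumm s₂).mul_left _))]
    refine tsum_congr fun t => ?_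
    have : ((M ^ (t + 1)) *ᵥ μ) s = ∑ s₂, M s s₂ * ((M ^ t) *ᵥ μ) s₂ := by
      rw [pow_succ', ← Matrix.mulVec_mulVec]
      simp [Matrix.mulVec, dotProduct]
    rw [this, Finset.mul_sum]
    exact Finset.sum_congr rfl fun s₂ _ => by ring
  have h2 : (∑' t : ℕ, γ ^ t * ((M ^ t) *ᵥ μ) s)
      = γ ^ 0 * ((M ^ 0) *ᵥ μ) s + ∑' t : ℕ, γ ^ (t + 1) * ((M ^ (t + 1)) *ᵥ μ) s :=
    Summable.tsum_eq_zero_add (hsumm s)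
  have h3 : (∑' t : ℕ, γ ^ (t + 1) * ((M ^ (t + 1)) *ᵥ μ) s)
      = γ * ∑' t : ℕ, γ ^ t * ((M ^ (t + 1)) *ᵥ μ) s := by
    rw [← tsum_mul_left]
    exact tsum_congr fun t => by ring
  rw [h1]
  have h4 : dFut γ P μ pol s
      = (1 - γ) * (μ s + ∑' t : ℕ, γ ^ (t + 1) * ((M ^ (t + 1)) *ᵥ μ) s) := by
    show (1 - γ) * (∑' t : ℕ, γ ^ t * ((M ^ t) *ᵥ μ) s) = _
    rw [h2]
    simp [Matrix.one_mulVec]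
  rw [h4, h3]
  ring

end aux2

section aux3
variable [Fintype S] [DecidableEq S] [Fintype A]
variable (γ : ℝ) (P : S → A → S → ℝ) (μ : S → ℝ) (pol : S → A → ℝ)

lemma key_sum (hγ0 : 0 ≤ γ) (hγ1 : γ < 1)
    (hP0 : ∀ s a s', 0 ≤ P s a s') (hP1 : ∀ s a, (∑ s', P s a s') = 1)
    (hμ0 : ∀ s, 0 ≤ μ s) (hμ1 : (∑ s, μ s) = 1)
    (hpol0 : ∀ s a, 0 ≤ pol s a) (hpol1 : ∀ s, (∑ a, pol s a) = 1) (f : S → ℝ) :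
    ∑ s, dFut γ P μ pol s * (γ * (∑ s', Pmat P pol s' s * f s') - f s)
      = -((1 - γ) * ∑ s, f s * μ s) := by
  have hfix := fun s => dFut_fixed γ P μ pol hγ0 hγ1 hP0 hP1 hμ0 hμ1 hpol0 hpol1 s
  set M := Pmat P pol with hM
  set d := dFut γ P μ pol with hd
  have step1 : ∀ s : S, d s * (γ * (∑ s', M s' s * f s') - f s)
      = (∑ s', γ * (f s' * (M s' s * d s))) - f s * d s := by
    intro s
    calc d s * (γ * (∑ s', M s' s * f s') - f s)
        = γ * (d s * ∑ s', M s' s * f s') - f s * d s := by ring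
      _ = γ * (∑ s', d s * (M s' s * f s')) - f s * d s := by rw [Finset.mul_sum]
      _ = (∑ s', γ * (f s' * (M s' s * d s))) - f s * d s := by
          rw [Finset.mul_sum]
          congr 1
          exact Finset.sum_congr rfl fun s' _ => by ring
  calc ∑ s, d s * (γ * (∑ s', M s' s * f s') - f s)
      = ∑ s, ((∑ s', γ * (f s' * (M s' s * d s))) - f s * d s) :=
        Finset.sum_congr rfl fun s _ => step1 s
    _ = (∑ s, ∑ s', γ * (f s' * (M s' s * d s))) - ∑ s, f s * d s :=
        Finset.sum_sub_distrib _ _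
    _ = (∑ s', ∑ s, γ * (f s' * (M s' s * d s))) - ∑ s', f s' * d s' := by
        rw [Finset.sum_comm]
    _ = (∑ s', γ * (f s' * (M *ᵥ d) s')) - ∑ s', f s' * d s' := by
        congr 1
        refine Finset.sum_congr rfl fun s' _ => ?_
        rw [show (M *ᵥ d) s' = ∑ s, M s' s * d s from rfl, Finset.mul_sum, Finset.mul_sum]
    _ = ∑ s', f s' * (γ * (M *ᵥ d) s' - d s') := by
        rw [← Finset.sum_sub_distrib]
        exact Finset.sum_congr rfl fun s' _ => by ring
    _ = ∑ s', f s' * (-((1 - γ) * μ s')) := by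
        refine Finset.sum_congr rfl fun s' _ => ?_
        rw [hfix s']; ring
    _ = -((1 - γ) * ∑ s, f s * μ s) := by
        rw [Finset.mul_sum, ← Finset.sum_neg_distrib]
        exact Finset.sum_congr rfl fun s _ => by ring

end aux3

/-- expected Bellman residual under policy `q` at state `s` -/
def dbar [Fintype S] [Fintype A] (γ : ℝ) (P : S → A → S → ℝ) (R : S → A → S → ℝ)
    (f : S → ℝ) (q : S → A → ℝ) (s : S) : ℝ :=
  ∑ a, q s a * (∑ s', P s a s' * (R s a s' + γ * f s' - f s))

section aux4
variable [Fintype S] [DecidableEq S] [Fintype A]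
variable (γ : ℝ) (P : S → A → S → ℝ) (R : S → A → S → ℝ) (f : S → ℝ)

lemma dbar_decomp (q : S → A → ℝ) (hP1 : ∀ s a, (∑ s', P s a s') = 1)
    (hq1 : ∀ s, (∑ a, q s a) = 1) (s : S) :
    dbar γ P R f q s = (∑ a, q s a * (∑ s', P s a s' * R s a s'))
      + (γ * (∑ s', Pmat P q s' s * f s') - f s) := by
  have inner : ∀ a : A, (∑ s', P s a s' * (R s a s' + γ * f s' - f s))
      = (∑ s', P s a s' * R s a s') + γ * (∑ s', P s a s' * f s') - f s := by
    intro a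
    have e : ∀ s' : S, P s a s' * (R s a s' + γ * f s' - f s)
        = (P s a s' * R s a s' + γ * (P s a s' * f s')) - f s * P s a s' :=
      fun s' => by ring
    rw [Finset.sum_congr rfl fun s' _ => e s', Finset.sum_sub_distrib,
      Finset.sum_add_distrib, ← Finset.mul_sum, ← Finset.mul_sum, hP1 s a, mul_one]
  have swap : ∑ a, q s a * (∑ s', P s a s' * f s') = ∑ s', Pmat P q s' s * f s' := by
    calc ∑ a, q s a * (∑ s', P s a s' * f s')
        = ∑ a, ∑ s', q s a * (P s a s' * f s') :=
          Finset.sum_congr rfl fun a _ => Finset.mul_sum _ _ _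
      _ = ∑ s', ∑ a, q s a * (P s a s' * f s') := Finset.sum_comm
      _ = ∑ s', (∑ a, P s a s' * q s a) * f s' := by
          refine Finset.sum_congr rfl fun s' _ => ?_
          rw [Finset.sum_mul]
          exact Finset.sum_congr rfl fun a _ => by ring
      _ = ∑ s', Pmat P q s' s * f s' := rfl
  calc dbar γ P R f q s
      = ∑ a, (q s a * (∑ s', P s a s' * R s a s')
          + γ * (q s a * (∑ s', P s a s' * f s')) - f s * q s a) := by
        refine Finset.sum_congr rfl fun a _ => ?_
        rw [show q s a * (∑ s', P s a s' * (R s a s' + γ * f s' - f s))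
            = q s a * ((∑ s', P s a s' * (R s a s' + γ * f s' - f s))) from rfl, inner a]
        ring
    _ = (∑ a, q s a * (∑ s', P s a s' * R s a s'))
          + γ * (∑ a, q s a * (∑ s', P s a s' * f s')) - f s * (∑ a, q s a) := by
        rw [Finset.sum_sub_distrib, Finset.sum_add_distrib, ← Finset.mul_sum, ← Finset.mul_sum]
    _ = (∑ a, q s a * (∑ s', P s a s' * R s a s'))
          + (γ * (∑ s', Pmat P q s' s * f s') - f s) := by
        rw [swap, hq1 s, mul_one]; ring

end aux4


section aux5
variable [Fintype S] [DecidableEq S] [Fintype A]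
variable (γ : ℝ) (P : S → A → S → ℝ) (R : S → A → S → ℝ) (μ : S → ℝ) (f : S → ℝ)

lemma sum_d_dbar (pol : S → A → ℝ) (hγ0 : 0 ≤ γ) (hγ1 : γ < 1)
    (hP0 : ∀ s a s', 0 ≤ P s a s') (hP1 : ∀ s a, (∑ s', P s a s') = 1)
    (hμ0 : ∀ s, 0 ≤ μ s) (hμ1 : (∑ s, μ s) = 1)
    (hpol0 : ∀ s a, 0 ≤ pol s a) (hpol1 : ∀ s, (∑ a, pol s a) = 1) :
    ∑ s, dFut γ P μ pol s * dbar γ P R f pol s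
      = (1 - γ) * Jret γ P R μ pol - (1 - γ) * ∑ s, f s * μ s := by
  have h1γ : (1 : ℝ) - γ ≠ 0 := by linarith
  have hJ : (1 - γ) * Jret γ P R μ pol
      = ∑ s, dFut γ P μ pol s * (∑ a, pol s a * (∑ s', P s a s' * R s a s')) := by
    unfold Jret; field_simp
  calc ∑ s, dFut γ P μ pol s * dbar γ P R f pol s
      = ∑ s, (dFut γ P μ pol s * (∑ a, pol s a * (∑ s', P s a s' * R s a s'))
          + dFut γ P μ pol s * (γ * (∑ s', Pmat P pol s' s * f s') - f s)) := by
        refine Finset.sum_congr rfl fun s _ => ?_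
        rw [dbar_decomp γ P R f pol hP1 hpol1 s]; ring
    _ = (∑ s, dFut γ P μ pol s * (∑ a, pol s a * (∑ s', P s a s' * R s a s')))
          + ∑ s, dFut γ P μ pol s * (γ * (∑ s', Pmat P pol s' s * f s') - f s) :=
        Finset.sum_add_distrib
    _ = (1 - γ) * Jret γ P R μ pol - (1 - γ) * ∑ s, f s * μ s := by
        rw [← hJ, key_sum γ P μ pol hγ0 hγ1 hP0 hP1 hμ0 hμ1 hpol0 hpol1 f]; ring

lemma Lsurr_eq (pol pol' : S → A → ℝ) (hpol0 : ∀ s a, 0 < pol s a) :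
    Lsurr γ P R μ f pol pol'
      = ∑ s, dFut γ P μ pol s * (dbar γ P R f pol' s - dbar γ P R f pol s) := by
  unfold Lsurr dbar
  refine Finset.sum_congr rfl fun s _ => ?_
  congr 1
  rw [← Finset.sum_sub_distrib]
  refine Finset.sum_congr rfl fun a _ => ?_
  rw [Finset.mul_sum, Finset.mul_sum, Finset.mul_sum, ← Finset.sum_sub_distrib]
  refine Finset.sum_congr rfl fun s' _ => ?_
  have h := (hpol0 s a).ne'
  field_simp

end aux5


/-- **Lemma 2 of the appendix.** For any `f : S → ℝ` and policies `π'`, `π` (with `π` positive),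
`J(π') - J(π) ≥ (1/(1-γ))(L_{π,f}(π') - 2 ε_f^{π'} D_TV(d^{π'}‖d^π))` and
`J(π') - J(π) ≤ (1/(1-γ))(L_{π,f}(π') + 2 ε_f^{π'} D_TV(d^{π'}‖d^π))`;
when `π' = π` both sides are identically zero. -/
theorem policy_bound_via_state_tv
    [Fintype S] [DecidableEq S] [Nonempty S] [Fintype A] [Nonempty A]
    (γ : ℝ) (hγ0 : 0 ≤ γ) (hγ1 : γ < 1)
    (P : S → A → S → ℝ) (hP0 : ∀ s a s', 0 ≤ P s a s')
    (hP1 : ∀ s a, (∑ s', P s a s') = 1)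
    (μ : S → ℝ) (hμ0 : ∀ s, 0 ≤ μ s) (hμ1 : (∑ s, μ s) = 1)
    (R : S → A → S → ℝ) (f : S → ℝ)
    (pol pol' : S → A → ℝ)
    (hpol0 : ∀ s a, 0 < pol s a) (hpol1 : ∀ s, (∑ a, pol s a) = 1)
    (hpol'0 : ∀ s a, 0 ≤ pol' s a) (hpol'1 : ∀ s, (∑ a, pol' s a) = 1) :
    (Jret γ P R μ pol' - Jret γ P R μ pol
      ≥ (1 / (1 - γ)) * (Lsurr γ P R μ f pol pol'
          - 2 * epsF γ P R f pol'
              * ((1 / 2) * ∑ s, |dFut γ P μ pol' s - dFut γ P μ pol s|)))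
    ∧ (Jret γ P R μ pol' - Jret γ P R μ pol
      ≤ (1 / (1 - γ)) * (Lsurr γ P R μ f pol pol'
          + 2 * epsF γ P R f pol'
              * ((1 / 2) * ∑ s, |dFut γ P μ pol' s - dFut γ P μ pol s|)))
    ∧ (pol' = pol →
        Jret γ P R μ pol' - Jret γ P R μ pol = 0
        ∧ (1 / (1 - γ)) * (Lsurr γ P R μ f pol pol'
            - 2 * epsF γ P R f pol'
                * ((1 / 2) * ∑ s, |dFut γ P μ pol' s - dFut γ P μ pol s|)) = 0
        ∧ (1 / (1 - γ)) * (Lsurr γ P R μ f pol pol'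
            + 2 * epsF γ P R f pol'
                * ((1 / 2) * ∑ s, |dFut γ P μ pol' s - dFut γ P μ pol s|)) = 0) := by
  have h1γ : (0 : ℝ) < 1 - γ := by linarith
  set J' := Jret γ P R μ pol' with hJ'
  set J := Jret γ P R μ pol with hJdef
  set L := Lsurr γ P R μ f pol pol' with hLdef
  set ε := epsF γ P R f pol' with hε
  set d' := dFut γ P μ pol' with hd'
  set d := dFut γ P μ pol with hdd
  set T := ∑ s, |d' s - d s| with hT
  -- ε bounds |dbar pol'|
  have heps : ∀ s : S, |dbar γ P R f pol' s| ≤ ε := by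
    intro s
    have hb : BddAbove (Set.range fun s : S =>
        |∑ a, pol' s a * (∑ s', P s a s' * (R s a s' + γ * f s' - f s))|) :=
      Set.Finite.bddAbove (Set.finite_range _)
    exact le_ciSup hb s
  have hA' := sum_d_dbar γ P R μ f pol' hγ0 hγ1 hP0 hP1 hμ0 hμ1 hpol'0 hpol'1
  have hA := sum_d_dbar γ P R μ f pol hγ0 hγ1 hP0 hP1 hμ0 hμ1
    (fun s a => (hpol0 s a).le) hpol1
  have hB : L = (∑ s, d s * dbar γ P R f pol' s) - ∑ s, d s * dbar γ P R f pol s := by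
    rw [hLdef, Lsurr_eq γ P R μ f pol pol' hpol0, ← Finset.sum_sub_distrib]
    exact Finset.sum_congr rfl fun s _ => by ring
  have hD : (∑ s, (d' s - d s) * dbar γ P R f pol' s)
      = (∑ s, d' s * dbar γ P R f pol' s) - ∑ s, d s * dbar γ P R f pol' s := by
    rw [← Finset.sum_sub_distrib]
    exact Finset.sum_congr rfl fun s _ => by ring
  have main : (1 - γ) * (J' - J) - L = ∑ s, (d' s - d s) * dbar γ P R f pol' s := by
    linear_combination -hA' + hA - hB - hD
  have habs : |∑ s, (d' s - d s) * dbar γ P R f pol' s| ≤ ε * T := by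
    calc |∑ s, (d' s - d s) * dbar γ P R f pol' s|
        ≤ ∑ s, |(d' s - d s) * dbar γ P R f pol' s| := Finset.abs_sum_le_sum_abs _ _
      _ ≤ ∑ s, |d' s - d s| * ε := by
          refine Finset.sum_le_sum fun s _ => ?_
          rw [abs_mul]
          exact mul_le_mul_of_nonneg_left (heps s) (abs_nonneg _)
      _ = ε * T := by rw [hT, ← Finset.sum_mul, mul_comm]
  rw [← main] at habs
  have habs' := abs_le.mp habs
  have hrw : (1 / (1 - γ)) * ((1 - γ) * (J' - J)) = J' - J := by
    field_simp
  have hnn : (0 : ℝ) ≤ 1 / (1 - γ) := by positivity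
  refine ⟨?_, ?_, ?_⟩
  · have h1 : L - 2 * ε * ((1 / 2) * T) ≤ (1 - γ) * (J' - J) := by linarith [habs'.2]
    have := mul_le_mul_of_nonneg_left h1 hnn
    rw [hrw] at this
    exact this
  · have h1 : (1 - γ) * (J' - J) ≤ L + 2 * ε * ((1 / 2) * T) := by linarith [habs'.1]
    have := mul_le_mul_of_nonneg_left h1 hnn
    rw [hrw] at this
    exact this
  · intro h
    subst h
    have hL0 : L = 0 := by
      rw [hLdef]
      unfold Lsurr
      refine Finset.sum_eq_zero fun s _ => ?_
      have inner : ∀ a ∈ Finset.univ, pol' s a * (∑ s', P s a s' *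
          ((pol' s a / pol' s a - 1) * (R s a s' + γ * f s' - f s))) = 0 := by
        intro a _
        rw [div_self (hpol0 s a).ne']
        simp
      rw [Finset.sum_eq_zero inner, mul_zero]
    have hT0 : T = 0 := by
      rw [hT]
      simp [hd', hdd]
    refine ⟨sub_self _, ?_, ?_⟩ <;> rw [hL0, hT0] <;> ring
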